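/- Let π₁, π₂ > 0, π₊ = π₁ + π₂, and let b₁, b₂, b₀, c₁, c₂, c₀ be elements of normed spaces, and r̄ ≥ 2. Then π₁|b₁ − b₀|^{r̄} + π₂|b₂ − b₀|^{r̄} + π₁‖c₁ − c₀‖^{r̄} + π₂‖c₂ − c₀‖^{r̄} ≥ C·π₊·(π₁π₂/π₊²)^{r̄/2}·|b₁ − b₂|^{r̄/2}·‖c₁ − c₂‖^{r̄/2} for some constant C > 0 depending only on r̄. -/

import Mathlib

private lemma merged_helper (r π₁ π₂ A B u : ℝ) (hr : 0 ≤ r) (h1 : 0 < π₁) (h2 : 0 < π₂)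
    (hA : 0 ≤ A) (hB : 0 ≤ B) (hu : 0 ≤ u) (htri : u ≤ A + B) :
    min π₁ π₂ * (u / 2) ^ r ≤ π₁ * A ^ r + π₂ * B ^ r := by
  rcases le_total A B with h | h
  · have h1' : (u / 2) ^ r ≤ B ^ r := Real.rpow_le_rpow (by positivity) (by linarith) hr
    have : min π₁ π₂ * (u / 2) ^ r ≤ π₂ * B ^ r :=
      mul_le_mul (min_le_right _ _) h1' (by positivity) h2.le
    have hAr : 0 ≤ π₁ * A ^ r := by positivity
    linarith
  · have h1' : (u / 2) ^ r ≤ A ^ r := Real.rpow_le_rpow (by positivity) (by linarith) hr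
    have : min π₁ π₂ * (u / 2) ^ r ≤ π₁ * A ^ r :=
      mul_le_mul (min_le_left _ _) h1' (by positivity) h1.le
    have hBr : 0 ≤ π₂ * B ^ r := by positivity
    linarith

/-- Mixed cross-term inequality used to control the merged regression-slope
parameter in the atom-merging algorithm for GGMoE models. -/
theorem merged_mixed_cross_term_ineq {E F : Type*} [NormedAddCommGroup E] [NormedAddCommGroup F]
    (rbar : ℝ) (hr : 2 ≤ rbar) :
    ∃ C > (0 : ℝ), ∀ (π₁ π₂ : ℝ) (b₁ b₂ b₀ : E) (c₁ c₂ c₀ : F), 0 < π₁ → 0 < π₂ →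
      C * (π₁ + π₂) * (π₁ * π₂ / (π₁ + π₂) ^ 2) ^ (rbar / 2) *
          (‖b₁ - b₂‖ ^ (rbar / 2) * ‖c₁ - c₂‖ ^ (rbar / 2)) ≤
        π₁ * ‖b₁ - b₀‖ ^ rbar + π₂ * ‖b₂ - b₀‖ ^ rbar +
          π₁ * ‖c₁ - c₀‖ ^ rbar + π₂ * ‖c₂ - c₀‖ ^ rbar := by
  have hr0 : (0:ℝ) ≤ rbar := by linarith
  refine ⟨2 * (2:ℝ) ^ (-rbar), by positivity, ?_⟩
  intro π₁ π₂ b₁ b₂ b₀ c₁ c₂ c₀ h1 h2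
  set u := ‖b₁ - b₂‖ with hu_def
  set v := ‖c₁ - c₂‖ with hv_def
  have hu : 0 ≤ u := norm_nonneg _
  have hv : 0 ≤ v := norm_nonneg _
  set m := min π₁ π₂ with hm
  have hm0 : 0 < m := lt_min h1 h2
  have hs : 0 < π₁ + π₂ := by linarith
  -- lower bounds from triangle inequality
  have keyB : m * (u / 2) ^ rbar ≤ π₁ * ‖b₁ - b₀‖ ^ rbar + π₂ * ‖b₂ - b₀‖ ^ rbar := by
    apply merged_helper rbar π₁ π₂ _ _ u hr0 h1 h2 (norm_nonneg _) (norm_nonneg _) hu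
    calc u = ‖(b₁ - b₀) + (b₀ - b₂)‖ := by rw [hu_def, sub_add_sub_cancel]
      _ ≤ ‖b₁ - b₀‖ + ‖b₀ - b₂‖ := norm_add_le _ _
      _ = ‖b₁ - b₀‖ + ‖b₂ - b₀‖ := by rw [norm_sub_rev b₀ b₂]
  have keyC : m * (v / 2) ^ rbar ≤ π₁ * ‖c₁ - c₀‖ ^ rbar + π₂ * ‖c₂ - c₀‖ ^ rbar := by
    apply merged_helper rbar π₁ π₂ _ _ v hr0 h1 h2 (norm_nonneg _) (norm_nonneg _) hv
    calc v = ‖(c₁ - c₀) + (c₀ - c₂)‖ := by rw [hv_def, sub_add_sub_cancel]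
      _ ≤ ‖c₁ - c₀‖ + ‖c₀ - c₂‖ := norm_add_le _ _
      _ = ‖c₁ - c₀‖ + ‖c₂ - c₀‖ := by rw [norm_sub_rev c₀ c₂]
  -- AM-GM: 2 u^{r/2} v^{r/2} ≤ u^r + v^r
  have hsq : ∀ w : ℝ, 0 ≤ w → w ^ rbar = (w ^ (rbar / 2)) ^ (2:ℕ) := by
    intro w hw
    rw [← Real.rpow_natCast (w ^ (rbar / 2)) 2, ← Real.rpow_mul hw]
    norm_num
  have hamgm : 2 * (u ^ (rbar / 2) * v ^ (rbar / 2)) ≤ u ^ rbar + v ^ rbar := by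
    rw [hsq u hu, hsq v hv]
    nlinarith [sq_nonneg (u ^ (rbar / 2) - v ^ (rbar / 2))]
  -- weight bound
  set t := π₁ * π₂ / (π₁ + π₂) ^ 2 with ht
  have ht0 : 0 < t := by positivity
  have ht1 : t ≤ 1 := by
    rw [ht, div_le_one (by positivity)]
    nlinarith
  have hw : (π₁ + π₂) * t ^ (rbar / 2) ≤ m := by
    have h1' : t ^ (rbar / 2) ≤ t ^ (1:ℝ) :=
      Real.rpow_le_rpow_of_exponent_ge ht0 ht1 (by linarith)
    rw [Real.rpow_one] at h1'
    have h2' : (π₁ + π₂) * t = π₁ * π₂ / (π₁ + π₂) := by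
      rw [ht]; field_simp
    have h3' : π₁ * π₂ / (π₁ + π₂) ≤ m := by
      rw [div_le_iff₀ hs]
      rcases le_total π₁ π₂ with h | h
      · rw [hm, min_eq_left h]; nlinarith
      · rw [hm, min_eq_right h]; nlinarith
    calc (π₁ + π₂) * t ^ (rbar / 2) ≤ (π₁ + π₂) * t := by
          exact mul_le_mul_of_nonneg_left h1' hs.le
      _ ≤ m := by rw [h2']; exact h3'
  -- rewrite (u/2)^r
  have hdiv : ∀ w : ℝ, 0 ≤ w → (w / 2) ^ rbar = (2:ℝ) ^ (-rbar) * w ^ rbar := by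
    intro w hw
    rw [Real.div_rpow hw (by norm_num), Real.rpow_neg (by norm_num)]
    ring
  have h2r : (0:ℝ) < (2:ℝ) ^ (-rbar) := by positivity
  have huv : 0 ≤ u ^ (rbar / 2) * v ^ (rbar / 2) := by positivity
  calc 2 * (2:ℝ) ^ (-rbar) * (π₁ + π₂) * t ^ (rbar / 2) *
        (u ^ (rbar / 2) * v ^ (rbar / 2))
      = (2:ℝ) ^ (-rbar) * ((π₁ + π₂) * t ^ (rbar / 2)) *
        (2 * (u ^ (rbar / 2) * v ^ (rbar / 2))) := by ring
    _ ≤ (2:ℝ) ^ (-rbar) * m * (2 * (u ^ (rbar / 2) * v ^ (rbar / 2))) := by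
        apply mul_le_mul_of_nonneg_right _ (by positivity)
        exact mul_le_mul_of_nonneg_left hw h2r.le
    _ ≤ (2:ℝ) ^ (-rbar) * m * (u ^ rbar + v ^ rbar) := by
        apply mul_le_mul_of_nonneg_left hamgm (by positivity)
    _ = m * (u / 2) ^ rbar + m * (v / 2) ^ rbar := by
        rw [hdiv u hu, hdiv v hv]; ring
    _ ≤ _ := by linarith
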